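/- Let ℓ be a positive integer and let a_n be defined by a_0 = 1, a_1 = 1 + ℓ, and a_n = ℓ a_{n-1} + ℓ a_{n-2} for n ≥ 2. Then for all r, s, t ≥ 2, a_{r+s+t+1} = ℓ a_r a_s a_t + ℓ^3 a_{r-1} a_{s-1} a_{t-1} - ℓ^4 a_{r-2} a_{s-2} a_{t-2}. -/

import Mathlib

theorem a_add_three (ℓ : ℤ) (hℓ : 0 < ℓ) (a : ℕ → ℤ)
    (ha0 : a 0 = 1) (ha1 : a 1 = 1 + ℓ)
    (ha : ∀ n ≥ 2, a n = ℓ * a (n - 1) + ℓ * a (n - 2)) :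
    ∀ r ≥ 2, ∀ s ≥ 2, ∀ t ≥ 2,
      a (r + s + t + 1) = ℓ * a r * a s * a t
        + ℓ ^ 3 * a (r - 1) * a (s - 1) * a (t - 1)
        - ℓ ^ 4 * a (r - 2) * a (s - 2) * a (t - 2) := by
  have hrec : ∀ n : ℕ, a (n + 2) = ℓ * a (n + 1) + ℓ * a n := by
    intro n
    have h := ha (n + 2) (by omega)
    have e1 : n + 2 - 1 = n + 1 := by omega
    have e2 : n + 2 - 2 = n := by omega
    rwa [e1, e2] at h
  -- two-variable addition formula
  have B : ∀ j m : ℕ, a (m + j + 3) = ℓ * a (m + 1) * a (j + 1) + ℓ ^ 2 * a m * a j := by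
    intro j m
    induction m using Nat.twoStepInduction with
    | zero =>
      have h1 : a (j + 3) = ℓ * a (j + 2) + ℓ * a (j + 1) := by
        have := hrec (j + 1)
        simpa [show j + 1 + 2 = j + 3 from by omega, show j + 1 + 1 = j + 2 from by omega]
          using this
      have h2 := hrec j
      simp only [Nat.zero_add, show (0 : ℕ) + j + 3 = j + 3 from by omega]
      rw [h1, h2, ha1, ha0]
      ring
    | one =>
      have h1 : a (j + 4) = ℓ * a (j + 3) + ℓ * a (j + 2) := by
        have := hrec (j + 2)
        simpa [show j + 2 + 2 = j + 4 from by omega, show j + 2 + 1 = j + 3 from by omega]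
          using this
      have h2 : a (j + 3) = ℓ * a (j + 2) + ℓ * a (j + 1) := by
        have := hrec (j + 1)
        simpa [show j + 1 + 2 = j + 3 from by omega, show j + 1 + 1 = j + 2 from by omega]
          using this
      have h3 := hrec j
      have ha2 : a 2 = ℓ * a 1 + ℓ * a 0 := hrec 0
      simp only [show (1 : ℕ) + j + 3 = j + 4 from by omega, show (1 : ℕ) + 1 = 2 from rfl]
      rw [h1, h2, h3, ha2, ha1, ha0]
      ring
    | more m ih1 ih2 =>
      have e1 : m + 2 + j + 3 = (m + j + 3) + 2 := by omega
      have e2 : m + 1 + j + 3 = (m + j + 3) + 1 := by omega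
      have h1 : a (m + 2 + j + 3) = ℓ * a (m + 1 + j + 3) + ℓ * a (m + j + 3) := by
        have := hrec (m + j + 3)
        rw [e1, e2]
        simpa using this
      have h2 : a (m + 2 + 1) = ℓ * a (m + 1 + 1) + ℓ * a (m + 1) := by
        have := hrec (m + 1)
        simpa [show m + 1 + 2 = m + 2 + 1 from by omega] using this
      have h3 : a (m + 2) = ℓ * a (m + 1) + ℓ * a m := hrec m
      rw [h1, ih1, ih2, h2, h3]
      ring
  intro r hr s hs t ht
  obtain ⟨n, rfl⟩ : ∃ n, r = n + 2 := ⟨r - 2, by omega⟩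
  obtain ⟨p, rfl⟩ : ∃ p, s = p + 2 := ⟨s - 2, by omega⟩
  obtain ⟨q, rfl⟩ : ∃ q, t = q + 2 := ⟨t - 2, by omega⟩
  have s1 : n + 2 - 1 = n + 1 := by omega
  have s2 : n + 2 - 2 = n := by omega
  have s3 : p + 2 - 1 = p + 1 := by omega
  have s4 : p + 2 - 2 = p := by omega
  have s5 : q + 2 - 1 = q + 1 := by omega
  have s6 : q + 2 - 2 = q := by omega
  rw [s1, s2, s3, s4, s5, s6]
  have h1 : a (n + 2 + (p + 2) + (q + 2) + 1)
      = ℓ * a (n + 2) * a (p + q + 4) + ℓ ^ 2 * a (n + 1) * a (p + q + 3) := by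
    have := B (p + q + 3) (n + 1)
    simpa [show n + 1 + (p + q + 3) + 3 = n + 2 + (p + 2) + (q + 2) + 1 from by omega,
      show n + 1 + 1 = n + 2 from by omega,
      show p + q + 3 + 1 = p + q + 4 from by omega] using this
  have h2 : a (p + q + 4) = ℓ * a (p + 2) * a (q + 1) + ℓ ^ 2 * a (p + 1) * a q := by
    have := B q (p + 1)
    simpa [show p + 1 + q + 3 = p + q + 4 from by omega,
      show p + 1 + 1 = p + 2 from by omega] using this
  have h3 : a (p + q + 3) = ℓ * a (p + 1) * a (q + 1) + ℓ ^ 2 * a p * a q := B q p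
  have e1 := hrec n
  have e2 := hrec p
  have e3 := hrec q
  rw [h1, h2, h3, e1, e2, e3]
  ring
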